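/- Let G be a K4-free simple graph on n vertices and Z0 a triangle-free induced subgraph of G with |Z0| ≥ (2/3)n. Then e(G) ≤ |Z0|·(n − (3/4)|Z0|). -/

import Mathlib

set_option maxHeartbeats 1000000


open scoped Classical

open Finset

/-- The subgraph of `G` consisting of edges with both endpoints in `Z`,
viewed as a graph on the same vertex set. -/
private def insideGraph {V : Type*} (G : SimpleGraph V) (Z : Finset V) : SimpleGraph V where
  Adj a b := G.Adj a b ∧ a ∈ Z ∧ b ∈ Z
  symm := ⟨fun a b h => ⟨h.1.symm, h.2.2, h.2.1⟩⟩
  loopless := ⟨fun a h => G.loopless.irrefl a h.1⟩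

private lemma insideGraph_le {V : Type*} (G : SimpleGraph V) (Z : Finset V) :
    insideGraph G Z ≤ G := fun _ _ h => h.1

/-- If every edge in `E` has an endpoint in `S`, then `#E ≤ ∑_{v ∈ S} deg v`. -/
private lemma cover_bound {V : Type*} [Fintype V] [DecidableEq V] (G : SimpleGraph V) [DecidableRel G.Adj]
    (E : Finset (Sym2 V)) (S : Finset V) (hE : E ⊆ G.edgeFinset)
    (h : ∀ e ∈ E, ∃ v ∈ S, v ∈ e) :
    E.card ≤ ∑ v ∈ S, G.degree v := by
  have hsubset : E ⊆ S.biUnion (fun v => G.incidenceFinset v) := by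
    intro e he
    obtain ⟨v, hvS, hve⟩ := h e he
    have hmem : e ∈ G.incidenceFinset v := by
      rw [SimpleGraph.mem_incidenceFinset]
      exact ⟨(SimpleGraph.mem_edgeFinset).1 (hE he), hve⟩
    rw [Finset.mem_biUnion]
    exact ⟨v, hvS, hmem⟩
  calc E.card ≤ (S.biUnion (fun v => G.incidenceFinset v)).card :=
        Finset.card_le_card hsubset
    _ ≤ ∑ v ∈ S, (G.incidenceFinset v).card := Finset.card_biUnion_le
    _ = ∑ v ∈ S, G.degree v := by
        refine Finset.sum_congr rfl fun v _ => ?_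
        exact G.card_incidenceFinset_eq_degree v

/-- Triangle-freeness of the induced graph on a set gives `CliqueFreeOn`. -/
private lemma cliqueFreeOn_of_induce {V : Type*} (G : SimpleGraph V) (s : Set V)
    (h : (G.induce s).CliqueFree 3) : G.CliqueFreeOn s 3 := by
  intro t hts ht
  refine h (t.attach.map ⟨fun x => (⟨x.1, hts x.2⟩ : s), ?_⟩) ?_
  · intro a b hab
    apply Subtype.ext
    simpa using congrArg Subtype.val hab
  constructor
  · intro a ha b hb hne
    simp only [Finset.coe_map, Set.mem_image, Finset.mem_coe, Finset.mem_attach,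
      Function.Embedding.coeFn_mk, true_and] at ha hb
    obtain ⟨x, hx⟩ := ha
    obtain ⟨y, hy⟩ := hb
    subst hx hy
    have hxy : (x : V) ≠ (y : V) := by
      intro hc
      exact hne (by simp [Subtype.ext hc])
    exact ht.1 x.2 y.2 hxy
  · rw [Finset.card_map, Finset.card_attach, ht.2]

theorem stmt_4 {V : Type*} [Fintype V] (G : SimpleGraph V)
    (hG : G.CliqueFree 4) (Z0 : Finset V)
    (hZtf : (G.induce (Z0 : Set V)).CliqueFree 3)
    (hZbig : (Z0.card : ℝ) ≥ 2 / 3 * Fintype.card V) :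
    (G.edgeFinset.card : ℝ) ≤ Z0.card * (Fintype.card V - (3 / 4 : ℝ) * Z0.card) := by
  classical
  set n : ℕ := Fintype.card V with hn
  -- the collection of triangle-free (induced) vertex sets
  have hZ0free : G.CliqueFreeOn (Z0 : Set V) 3 := cliqueFreeOn_of_induce G _ hZtf
  obtain ⟨Z, hZmem, hZmax⟩ := Finset.exists_max_image
    (Finset.univ.filter fun A : Finset V => G.CliqueFreeOn (A : Set V) 3)
    (fun A => A.card) ⟨Z0, by simp [hZ0free]⟩
  have hZfree : G.CliqueFreeOn (Z : Set V) 3 := (Finset.mem_filter.1 hZmem).2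
  have hz0z : Z0.card ≤ Z.card := hZmax Z0 (by simp [hZ0free])
  -- every vertex degree is at most |Z|
  have hdeg : ∀ u : V, G.degree u ≤ Z.card := by
    intro u
    have hGon : G.CliqueFreeOn Set.univ 4 := by
      rw [SimpleGraph.cliqueFreeOn_univ]; exact hG
    have h1 : G.CliqueFreeOn (Set.univ ∩ G.neighborSet u) 3 :=
      SimpleGraph.CliqueFreeOn.of_succ (G := G) (n := 3)
        (show G.CliqueFreeOn Set.univ (3 + 1) from hGon) (Set.mem_univ u)
    have hsub : ((G.neighborFinset u : Finset V) : Set V) ⊆ Set.univ ∩ G.neighborSet u := by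
      intro x hx
      exact ⟨Set.mem_univ x, by simpa using hx⟩
    have h2 : G.CliqueFreeOn ((G.neighborFinset u : Finset V) : Set V) 3 :=
      fun t hts ht => h1 (Set.Subset.trans hts hsub) ht
    have := hZmax (G.neighborFinset u) (Finset.mem_filter.2 ⟨Finset.mem_univ _, h2⟩)
    rwa [← SimpleGraph.card_neighborFinset_eq_degree]
  set H : SimpleGraph V := insideGraph G Z with hH
  have hHle : H ≤ G := insideGraph_le G Z
  have hHsub : H.edgeFinset ⊆ G.edgeFinset := by
    intro e he
    rw [SimpleGraph.mem_edgeFinset] at he ⊢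
    exact SimpleGraph.edgeSet_mono hHle he
  -- split the edges of G
  have hsplit : G.edgeFinset.card ≤ H.edgeFinset.card + Zᶜ.card * Z.card := by
    have hcover : G.edgeFinset ⊆ H.edgeFinset ∪ Zᶜ.biUnion (fun v => G.incidenceFinset v) := by
      intro e he
      induction e with
      | h a b =>
        have hab : G.Adj a b := (SimpleGraph.mem_edgeFinset).1 he
        by_cases haZ : a ∈ Z
        · by_cases hbZ : b ∈ Z
          · exact Finset.mem_union_left _ (by
              rw [SimpleGraph.mem_edgeFinset]
              exact ⟨hab, haZ, hbZ⟩)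
          · have hmem : s(a, b) ∈ G.incidenceFinset b := by
              rw [SimpleGraph.mem_incidenceFinset]
              exact ⟨G.mem_edgeSet.2 hab, by simp⟩
            refine Finset.mem_union_right _ ?_
            rw [Finset.mem_biUnion]
            exact ⟨b, by simpa using hbZ, hmem⟩
        · have hmem : s(a, b) ∈ G.incidenceFinset a := by
            rw [SimpleGraph.mem_incidenceFinset]
            exact ⟨G.mem_edgeSet.2 hab, by simp⟩
          refine Finset.mem_union_right _ ?_
          rw [Finset.mem_biUnion]
          exact ⟨a, by simpa using haZ, hmem⟩
    calc G.edgeFinset.card ≤ (H.edgeFinset ∪ Zᶜ.biUnion (fun v => G.incidenceFinset v)).card :=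
          Finset.card_le_card hcover
      _ ≤ H.edgeFinset.card + (Zᶜ.biUnion (fun v => G.incidenceFinset v)).card := Finset.card_union_le _ _
      _ ≤ H.edgeFinset.card + ∑ v ∈ Zᶜ, (G.incidenceFinset v).card :=
          Nat.add_le_add_left Finset.card_biUnion_le _
      _ ≤ H.edgeFinset.card + Zᶜ.card * Z.card := by
          refine Nat.add_le_add_left ?_ _
          calc ∑ v ∈ Zᶜ, (G.incidenceFinset v).card = ∑ v ∈ Zᶜ, G.degree v := by
                refine Finset.sum_congr rfl fun v _ => G.card_incidenceFinset_eq_degree v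
            _ ≤ ∑ _v ∈ Zᶜ, Z.card := Finset.sum_le_sum fun v _ => hdeg v
            _ = Zᶜ.card * Z.card := by rw [Finset.sum_const, smul_eq_mul]
  -- Mantel-type bound for edges inside Z
  have hMantel : ∃ d : ℕ, d ≤ Z.card ∧ H.edgeFinset.card ≤ (Z.card - d) * d := by
    by_cases hne : Nonempty V
    · obtain ⟨v, _, hvmax⟩ := Finset.exists_max_image Finset.univ
        (fun u => H.degree u) Finset.univ_nonempty
      refine ⟨H.degree v, ?_, ?_⟩
      · have hmono : H.degree v ≤ G.degree v := by
          rw [← SimpleGraph.card_neighborFinset_eq_degree, ← SimpleGraph.card_neighborFinset_eq_degree]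
          refine Finset.card_le_card fun x hx => ?_
          rw [SimpleGraph.mem_neighborFinset] at hx ⊢
          exact hHle hx
        exact le_trans hmono (hdeg v)
      by_cases hd : H.degree v = 0
      · -- no edges at all
        have : ∑ u, H.degree u = 0 := by
          refine Finset.sum_eq_zero fun u _ => Nat.le_zero.1 ?_
          calc H.degree u ≤ H.degree v := hvmax u (Finset.mem_univ u)
            _ = 0 := hd
        have h2 : 2 * H.edgeFinset.card = 0 := by
          rw [← SimpleGraph.sum_degrees_eq_twice_card_edges]; exact this
        omega
      · -- v has positive degree, hence v ∈ Z
        obtain ⟨b, hb⟩ : ∃ b, H.Adj v b := by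
          have : 0 < H.degree v := Nat.pos_of_ne_zero hd
          rw [← SimpleGraph.card_neighborFinset_eq_degree, Finset.card_pos] at this
          obtain ⟨b, hbmem⟩ := this
          exact ⟨b, (H.mem_neighborFinset v b).1 hbmem⟩
        have hvZ : v ∈ Z := hb.2.1
        have hNsub : H.neighborFinset v ⊆ Z := by
          intro x hx
          exact ((H.mem_neighborFinset v x).1 hx).2.2
        -- the neighborhood of v in H is independent
        have hindep : ∀ a bb : V, a ∈ H.neighborFinset v → bb ∈ H.neighborFinset v →
            ¬ H.Adj a bb := by
          intro a bb ha hbb hadj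
          have haN : H.Adj v a := (H.mem_neighborFinset v a).1 ha
          have hbN : H.Adj v bb := (H.mem_neighborFinset v bb).1 hbb
          have hvZ' : v ∈ (Z : Set V) := by exact_mod_cast hvZ
          have h2 : G.CliqueFreeOn ((Z : Set V) ∩ G.neighborSet v) 2 :=
            SimpleGraph.CliqueFreeOn.of_succ (G := G) (n := 2)
              (show G.CliqueFreeOn (Z : Set V) (2 + 1) from hZfree) hvZ'
          have hpair := (SimpleGraph.cliqueFreeOn_two G).1 h2
          have haS : a ∈ (Z : Set V) ∩ G.neighborSet v := ⟨by exact_mod_cast haN.2.2, haN.1⟩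
          have hbS : bb ∈ (Z : Set V) ∩ G.neighborSet v := ⟨by exact_mod_cast hbN.2.2, hbN.1⟩
          exact hpair haS hbS hadj.1.ne hadj.1
        -- every H-edge has an endpoint in Z \ N(v)
        have hcov : ∀ e ∈ H.edgeFinset, ∃ u ∈ Z \ H.neighborFinset v, u ∈ e := by
          intro e he
          induction e with
          | h a bb =>
            have hab : H.Adj a bb := (SimpleGraph.mem_edgeFinset).1 he
            by_cases haN : a ∈ H.neighborFinset v
            · by_cases hbN : bb ∈ H.neighborFinset v
              · exact absurd hab (hindep a bb haN hbN)
              · exact ⟨bb, Finset.mem_sdiff.2 ⟨hab.2.2, hbN⟩, by simp⟩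
            · exact ⟨a, Finset.mem_sdiff.2 ⟨hab.2.1, haN⟩, by simp⟩
        have hcard : (Z \ H.neighborFinset v).card = Z.card - H.degree v := by
          rw [Finset.card_sdiff_of_subset hNsub, SimpleGraph.card_neighborFinset_eq_degree]
        calc H.edgeFinset.card ≤ ∑ u ∈ Z \ H.neighborFinset v, H.degree u :=
              cover_bound H H.edgeFinset (Z \ H.neighborFinset v) (fun _ h => h) hcov
          _ ≤ ∑ _u ∈ Z \ H.neighborFinset v, H.degree v :=
              Finset.sum_le_sum fun u _ => hvmax u (Finset.mem_univ u)
          _ = (Z.card - H.degree v) * H.degree v := by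
              rw [Finset.sum_const, smul_eq_mul, hcard]
    · -- V is empty
      refine ⟨0, Nat.zero_le _, ?_⟩
      simp only [not_nonempty_iff] at hne
      have : H.edgeFinset = ∅ := by
        ext e
        induction e with
        | h a b => exact isEmptyElim a
      simp [this]
  obtain ⟨d, hdZ, hHbound⟩ := hMantel
  -- now do the real arithmetic
  have hzn : Z.card ≤ n := by rw [hn]; exact Finset.card_le_univ Z
  have hWcard : Zᶜ.card = n - Z.card := by
    rw [Finset.card_compl, hn]
  have key : (G.edgeFinset.card : ℝ) ≤ (Z.card - d) * d + (n - Z.card) * Z.card := by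
    have h1 : (G.edgeFinset.card : ℝ) ≤ (H.edgeFinset.card : ℝ) + (Zᶜ.card : ℝ) * Z.card := by
      exact_mod_cast hsplit
    have h2 : (H.edgeFinset.card : ℝ) ≤ ((Z.card : ℝ) - d) * d := by
      have := hHbound
      have hcast : ((Z.card - d) * d : ℕ) = ((Z.card : ℝ) - d) * d := by
        push_cast [Nat.cast_sub hdZ]; ring
      calc (H.edgeFinset.card : ℝ) ≤ (((Z.card - d) * d : ℕ) : ℝ) := by exact_mod_cast this
        _ = ((Z.card : ℝ) - d) * d := hcast
    have h3 : (Zᶜ.card : ℝ) = (n : ℝ) - Z.card := by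
      rw [hWcard, Nat.cast_sub hzn]
    rw [h3] at h1
    linarith
  have hdZ' : (d : ℝ) ≤ Z.card := by exact_mod_cast hdZ
  have hd0 : (0 : ℝ) ≤ d := Nat.cast_nonneg d
  have hz0z' : (Z0.card : ℝ) ≤ Z.card := by exact_mod_cast hz0z
  have hzn' : (Z.card : ℝ) ≤ n := by exact_mod_cast hzn
  have hbig' : 2 / 3 * (n : ℝ) ≤ Z0.card := hZbig
  nlinarith [sq_nonneg ((Z.card : ℝ) - 2 * d), sq_nonneg ((Z.card : ℝ) - (Z0.card : ℝ)),
    mul_nonneg (sub_nonneg.2 hz0z') (sub_nonneg.2 hzn')]
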